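/- If w is a word of length n−1 containing each of the symbols 1,2,…,n−1 exactly once, then the concatenation of n−1 copies of w contains, as a subword, a reduced word for the longest element w₀ of the symmetric group S_n (i.e., a word j_1,…,j_{n(n−1)/2} with s_{j_1}···s_{j_{n(n−1)/2}} = w₀). -/

import Mathlib

/-- The adjacent transposition `s_h = (h, h+1)` of `Fin n` (0-indexed, junk
value `1` when out of range). -/
def adjTransposition (n : ℕ) (h : ℕ) : Equiv.Perm (Fin n) :=
  if hh : h + 1 < n then Equiv.swap ⟨h, by omega⟩ ⟨h + 1, hh⟩ else 1

namespace Stmt19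

open Finset

def pval (n : ℕ) (π : Equiv.Perm (Fin n)) (p : ℕ) : ℕ :=
  if hp : p < n then (π ⟨p, hp⟩ : ℕ) else p

def pguard (n : ℕ) (π : Equiv.Perm (Fin n)) (h : ℕ) : Prop :=
  h + 1 < n ∧ pval n π h < pval n π (h + 1)

instance (n : ℕ) (π : Equiv.Perm (Fin n)) (h : ℕ) : Decidable (pguard n π h) := by
  unfold pguard; infer_instance

def pstep (n : ℕ) (π : Equiv.Perm (Fin n)) (h : ℕ) : Equiv.Perm (Fin n) :=
  if pguard n π h then π * adjTransposition n h else π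

def passP (n : ℕ) (π : Equiv.Perm (Fin n)) (l : List ℕ) : Equiv.Perm (Fin n) :=
  l.foldl (pstep n) π

def kept (n : ℕ) : Equiv.Perm (Fin n) → List ℕ → List ℕ
  | _, [] => []
  | π, h :: l => if pguard n π h then h :: kept n (pstep n π h) l else kept n (pstep n π h) l

def NN (n s : ℕ) (π : Equiv.Perm (Fin n)) (m : ℕ) : ℕ :=
  (univ.filter fun p : Fin n => (p : ℕ) < m ∧ s ≤ (π p : ℕ)).card

def DD (n : ℕ) (π : Equiv.Perm (Fin n)) : Finset (Fin n × Fin n) :=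
  univ.filter fun x => (x.1 < x.2 ∧ π x.2 < π x.1) ∨ (x.2 < x.1 ∧ π x.1 < π x.2)

-- basic facts about adjTransposition
lemma adj_eq {n h : ℕ} (hh : h + 1 < n) :
    adjTransposition n h = Equiv.swap ⟨h, by omega⟩ ⟨h + 1, hh⟩ := by
  simp [adjTransposition, hh]

lemma adj_apply_val {n h : ℕ} (hh : h + 1 < n) (p : Fin n) :
    ((adjTransposition n h p : Fin n) : ℕ) =
      if (p : ℕ) = h then h + 1 else if (p : ℕ) = h + 1 then h else (p : ℕ) := by
  rw [adj_eq hh]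
  rcases eq_or_ne p ⟨h, by omega⟩ with rfl | hp
  · simp [Equiv.swap_apply_left]
  · rcases eq_or_ne p ⟨h + 1, hh⟩ with rfl | hp'
    · simp [Equiv.swap_apply_right, Fin.ext_iff]
    · rw [Equiv.swap_apply_of_ne_of_ne hp hp']
      simp only [ne_eq, Fin.ext_iff] at hp hp'
      rw [if_neg hp, if_neg hp']

lemma NN_congr {n s m : ℕ} {π π' : Equiv.Perm (Fin n)}
    (hc : ∀ p : Fin n, (p : ℕ) < m → π p = π' p) : NN n s π m = NN n s π' m := by
  unfold NN
  congr 1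
  apply Finset.filter_congr
  intro p _
  constructor
  · rintro ⟨h1, h2⟩; exact ⟨h1, by rw [← hc p h1]; exact h2⟩
  · rintro ⟨h1, h2⟩; exact ⟨h1, by rw [hc p h1]; exact h2⟩

lemma NN_succ {n s m : ℕ} (π : Equiv.Perm (Fin n)) (hm : m < n) :
    NN n s π (m + 1) = NN n s π m + if s ≤ (π ⟨m, hm⟩ : ℕ) then 1 else 0 := by
  unfold NN
  have hsplit : (univ.filter fun p : Fin n => (p : ℕ) < m + 1 ∧ s ≤ (π p : ℕ)) =
      (univ.filter fun p : Fin n => (p : ℕ) < m ∧ s ≤ (π p : ℕ)) ∪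
      (univ.filter fun p : Fin n => (p : ℕ) = m ∧ s ≤ (π p : ℕ)) := by
    rw [← Finset.filter_or]
    apply Finset.filter_congr
    intro p _
    constructor
    · rintro ⟨h1, h2⟩
      rcases Nat.lt_or_ge (p : ℕ) m with h | h
      · exact Or.inl ⟨h, h2⟩
      · exact Or.inr ⟨by omega, h2⟩
    · rintro (⟨h1, h2⟩ | ⟨h1, h2⟩) <;> exact ⟨by omega, h2⟩
  rw [hsplit, Finset.card_union_of_disjoint]
  · congr 1
    split_ifs with hs
    · rw [Finset.card_eq_one]
      refine ⟨⟨m, hm⟩, ?_⟩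
      ext p
      simp only [Finset.mem_filter, Finset.mem_univ, true_and, Finset.mem_singleton, Fin.ext_iff]
      constructor
      · rintro ⟨h1, _⟩; exact h1
      · rintro rfl; exact ⟨rfl, hs⟩
    · rw [Finset.card_eq_zero]
      ext p
      simp only [Finset.mem_filter, Finset.mem_univ, true_and, Finset.notMem_empty, iff_false]
      rintro ⟨h1, h2⟩
      apply hs
      have : p = ⟨m, hm⟩ := Fin.ext h1
      rwa [← this]
  · rw [Finset.disjoint_filter]
    rintro p _ ⟨h1, _⟩ ⟨h2, _⟩
    omega

lemma NN_stable {n s m : ℕ} (π : Equiv.Perm (Fin n)) (hm : n ≤ m) :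
    NN n s π m = NN n s π n := by
  unfold NN
  congr 1
  apply Finset.filter_congr
  intro p _
  have := p.isLt
  constructor
  · rintro ⟨_, h2⟩; exact ⟨this, h2⟩
  · rintro ⟨_, h2⟩; exact ⟨by omega, h2⟩

lemma NN_swap_inside {n s m h : ℕ} (π : Equiv.Perm (Fin n)) (hh : h + 1 < n) (hm : h + 1 < m) :
    NN n s (π * adjTransposition n h) m = NN n s π m := by
  unfold NN
  apply Finset.card_bij' (i := fun p _ => adjTransposition n h p)
    (j := fun p _ => adjTransposition n h p)
  · intro p hp
    simp only [Finset.mem_filter, Finset.mem_univ, true_and] at hp ⊢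
    have hv := adj_apply_val hh p
    constructor
    · split_ifs at hv <;> omega
    · rw [Equiv.Perm.mul_apply] at hp
      exact hp.2
  · intro p hp
    simp only [Finset.mem_filter, Finset.mem_univ, true_and] at hp ⊢
    have hv := adj_apply_val hh p
    constructor
    · split_ifs at hv <;> omega
    · rw [Equiv.Perm.mul_apply]
      have : adjTransposition n h (adjTransposition n h p) = p := by
        rw [adj_eq hh, Equiv.swap_apply_self]
      rw [this]
      exact hp.2
  · intro p _
    rw [adj_eq hh, Equiv.swap_apply_self]
  · intro p _
    rw [adj_eq hh, Equiv.swap_apply_self]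

lemma NN_one (n s : ℕ) : ∀ m, NN n s 1 m = min m n - s := by
  intro m
  induction m with
  | zero =>
    have : NN n s 1 0 = 0 := by
      unfold NN
      rw [Finset.card_eq_zero]
      ext p
      simp
    omega
  | succ m ih =>
    rcases Nat.lt_or_ge m n with hm | hm
    · rw [NN_succ 1 hm]
      simp only [Equiv.Perm.one_apply]
      rw [ih]
      by_cases hs : s ≤ m <;> simp only [hs, if_true, if_false, Fin.val_mk] <;> omega
    · rw [NN_stable 1 (by omega), ← NN_stable 1 hm, ih]
      omega

lemma NN_total {n s m : ℕ} (π : Equiv.Perm (Fin n)) (hm : n ≤ m) :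
    NN n s π m = n - s := by
  rw [NN_stable π hm]
  have h1 : NN n s 1 n = n - s := by rw [NN_one]; omega
  rw [← h1]
  unfold NN
  apply Finset.card_bij' (i := fun p _ => π p) (j := fun q _ => π⁻¹ q)
  · intro p hp
    simp only [Finset.mem_filter, Finset.mem_univ, true_and] at hp ⊢
    exact ⟨(π p).isLt, by simpa using hp.2⟩
  · intro q hq
    simp only [Finset.mem_filter, Finset.mem_univ, true_and] at hq ⊢
    refine ⟨(π⁻¹ q).isLt, ?_⟩
    simpa using hq.2
  · intro p _; simp
  · intro q _; simp

lemma adj_apply_left {n h : ℕ} (hh : h + 1 < n) :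
    adjTransposition n h ⟨h, by omega⟩ = ⟨h + 1, hh⟩ := by
  rw [adj_eq hh, Equiv.swap_apply_left]

lemma adj_apply_right {n h : ℕ} (hh : h + 1 < n) :
    adjTransposition n h ⟨h + 1, hh⟩ = ⟨h, by omega⟩ := by
  rw [adj_eq hh, Equiv.swap_apply_right]

lemma pval_lt {n p : ℕ} (π : Equiv.Perm (Fin n)) (hp : p < n) :
    pval n π p = (π ⟨p, hp⟩ : ℕ) := dif_pos hp

lemma NN_step_mono {n s m : ℕ} (π : Equiv.Perm (Fin n)) (h : ℕ) :
    NN n s π m ≤ NN n s (pstep n π h) m := by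
  unfold pstep
  split_ifs with hg
  swap
  · exact le_refl _
  obtain ⟨hh, hasc⟩ := hg
  rcases Nat.lt_or_ge h m with hm1 | hm1
  swap
  · -- m ≤ h : positions < m untouched
    apply le_of_eq
    apply NN_congr
    intro p hp
    rw [Equiv.Perm.mul_apply]
    have hv := adj_apply_val hh p
    have h1 : (p : ℕ) ≠ h := by omega
    have h2 : (p : ℕ) ≠ h + 1 := by omega
    rw [if_neg h1, if_neg h2] at hv
    have : adjTransposition n h p = p := Fin.ext hv
    rw [this]
  rcases Nat.lt_or_ge (h + 1) m with hm2 | hm2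
  · -- h + 1 < m : swap inside window
    exact le_of_eq (NN_swap_inside π hh hm2).symm
  -- m = h + 1
  have hm : m = h + 1 := by omega
  subst hm
  have hhn : h < n := by omega
  rw [NN_succ π hhn, NN_succ (π * adjTransposition n h) hhn]
  have he : NN n s π h = NN n s (π * adjTransposition n h) h := by
    apply NN_congr
    intro p hp
    rw [Equiv.Perm.mul_apply]
    have hv := adj_apply_val hh p
    have h1 : (p : ℕ) ≠ h := by omega
    have h2 : (p : ℕ) ≠ h + 1 := by omega
    rw [if_neg h1, if_neg h2] at hv
    have : adjTransposition n h p = p := Fin.ext hv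
    rw [this]
  have hmid : (π * adjTransposition n h) ⟨h, hhn⟩ = π ⟨h + 1, hh⟩ := by
    rw [Equiv.Perm.mul_apply, adj_apply_left hh]
  rw [hmid, ← he]
  rw [pval_lt π (show h < n by omega), pval_lt π hh] at hasc
  split_ifs with hs1 hs2 <;> omega

lemma NN_pass_mono {n s m : ℕ} (π : Equiv.Perm (Fin n)) (l : List ℕ) :
    NN n s π m ≤ NN n s (passP n π l) m := by
  induction l generalizing π with
  | nil => exact le_refl _
  | cons h t ih =>
    calc NN n s π m ≤ NN n s (pstep n π h) m := NN_step_mono π h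
    _ ≤ _ := ih (pstep n π h)

lemma NN_untouched {n s m h : ℕ} (π : Equiv.Perm (Fin n)) (hh : h + 1 < n) (hm : m ≤ h) :
    NN n s (π * adjTransposition n h) m = NN n s π m := by
  apply NN_congr
  intro p hp
  rw [Equiv.Perm.mul_apply]
  have hv := adj_apply_val hh p
  have h1 : (p : ℕ) ≠ h := by omega
  have h2 : (p : ℕ) ≠ h + 1 := by omega
  rw [if_neg h1, if_neg h2] at hv
  rw [Fin.ext hv]

lemma pass_ge {n s m : ℕ} (π : Equiv.Perm (Fin n)) (l : List ℕ)
    (hmn : m + 1 < n) (hml : m ∈ l) :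
    min (NN n s π (m + 2)) (NN n s π m + 1) ≤ NN n s (passP n π l) (m + 1) := by
  induction l generalizing π with
  | nil => simp at hml
  | cons h t ih =>
    have hfold : passP n π (h :: t) = passP n (pstep n π h) t := by
      simp [passP]
    rw [hfold]
    by_cases hhm : h = m
    · subst hhm
      have hkey : min (NN n s π (h + 2)) (NN n s π h + 1) ≤ NN n s (pstep n π h) (h + 1) := by
        have hhn : h < n := by omega
        unfold pstep
        by_cases hasc : pval n π h < pval n π (h + 1)
        · rw [if_pos ⟨hmn, hasc⟩]
          rw [pval_lt π hhn, pval_lt π hmn] at hasc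
          rw [NN_succ (π * adjTransposition n h) hhn, NN_untouched π hmn (le_refl h)]
          have hmid : (π * adjTransposition n h) ⟨h, hhn⟩ = π ⟨h + 1, hmn⟩ := by
            rw [Equiv.Perm.mul_apply, adj_apply_left hmn]
          rw [hmid]
          by_cases hs : s ≤ (π ⟨h + 1, hmn⟩ : ℕ)
          · rw [if_pos hs]
            exact min_le_right _ _
          · rw [if_neg hs]
            have ebr : NN n s π (h + 1 + 1) = NN n s π (h + 2) := rfl
            have e1 : NN n s π (h + 1 + 1) = NN n s π (h + 1) + 0 := by
              rw [NN_succ π hmn, if_neg hs]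
            have e2 : NN n s π (h + 1) = NN n s π h + 0 := by
              rw [NN_succ π hhn, if_neg (by omega)]
            have : NN n s π (h + 2) = NN n s π h := by omega
            calc min (NN n s π (h + 2)) (NN n s π h + 1) ≤ NN n s π (h + 2) :=
                  min_le_left _ _
              _ = NN n s π h + 0 := by omega
              _ ≤ _ := by omega
        · rw [if_neg (by intro hg; exact hasc hg.2)]
          rw [pval_lt π hhn, pval_lt π hmn] at hasc
          rw [NN_succ π hhn]
          by_cases hs : s ≤ (π ⟨h + 1, hmn⟩ : ℕ)
          · rw [if_pos (by omega)]
            exact min_le_right _ _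
          · have ebr : NN n s π (h + 1 + 1) = NN n s π (h + 2) := rfl
            have e1 : NN n s π (h + 1 + 1) = NN n s π (h + 1) + 0 := by
              rw [NN_succ π hmn, if_neg hs]
            have e2 : NN n s π (h + 1) = NN n s π h + if s ≤ (π ⟨h, hhn⟩ : ℕ) then 1 else 0 :=
              NN_succ π hhn
            calc min (NN n s π (h + 2)) (NN n s π h + 1) ≤ NN n s π (h + 2) :=
                  min_le_left _ _
              _ = NN n s π (h + 1) := by omega
              _ = _ := by rw [NN_succ π hhn]
      exact le_trans hkey (NN_pass_mono _ t)
    · have hml' : m ∈ t := by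
        rcases List.mem_cons.mp hml with h1 | h1
        · exact absurd h1.symm hhm
        · exact h1
      calc min (NN n s π (m + 2)) (NN n s π m + 1)
          ≤ min (NN n s (pstep n π h) (m + 2)) (NN n s (pstep n π h) m + 1) := by
            have := NN_step_mono (s := s) (m := m + 2) π h
            have := NN_step_mono (s := s) (m := m) π h
            omega
        _ ≤ _ := ih (pstep n π h) hml'

lemma pass_split (n t : ℕ) (w : List ℕ) :
    passP n 1 (List.replicate (t + 1) w).flatten =
      passP n (passP n 1 (List.replicate t w).flatten) w := by
  rw [List.replicate_succ', List.flatten_append]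
  unfold passP
  rw [List.foldl_append]
  simp

lemma invariant {n : ℕ} {w : List ℕ} (hw : w.Perm (List.range (n - 1))) (s : ℕ) :
    ∀ t m, min m (min (n - s) ((m + (n - s) + t + 1 - n) / 2)) ≤
      NN n s (passP n 1 (List.replicate t w).flatten) m := by
  intro t
  induction t with
  | zero =>
    intro m
    have h0 : passP n 1 (List.replicate 0 w).flatten = 1 := rfl
    rw [h0, NN_one]
    omega
  | succ t ih =>
    intro m
    rw [pass_split]
    rcases Nat.eq_zero_or_pos m with rfl | hm1
    · have : NN n s (passP n (passP n 1 (List.replicate t w).flatten) w) 0 = 0 := by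
        unfold NN
        rw [Finset.card_eq_zero]
        ext p
        simp
      omega
    rcases Nat.lt_or_ge m n with hmn | hmn
    · have hmem : m - 1 ∈ w := (hw.mem_iff).2 (List.mem_range.mpr (by omega))
      have hp := pass_ge (s := s) (passP n 1 (List.replicate t w).flatten) w
        (show m - 1 + 1 < n by omega) hmem
      have e1 : m - 1 + 2 = m + 1 := by omega
      have e2 : m - 1 + 1 = m := by omega
      rw [e1, e2] at hp
      have ihA := ih (m + 1)
      have ihB := ih (m - 1)
      omega
    · rw [NN_total _ hmn]
      omega

lemma card_filter_lt_le (n m : ℕ) :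
    (univ.filter fun p : Fin n => (p : ℕ) < m).card ≤ m := by
  have h : (univ.filter fun p : Fin n => (p : ℕ) < m).card ≤ (Finset.range m).card := by
    refine Finset.card_le_card_of_injOn (fun p : Fin n => (p : ℕ)) ?_ ?_
    · intro p hp
      simp only [Finset.mem_coe, Finset.mem_filter] at hp
      simpa using hp.2
    · intro p _ q _ hpq
      exact Fin.ext hpq
  simpa using h

lemma final_rev {n : ℕ} {w : List ℕ} (hw : w.Perm (List.range (n - 1))) :
    passP n 1 (List.replicate (n - 1) w).flatten = Fin.revPerm := by
  set πF := passP n 1 (List.replicate (n - 1) w).flatten with hπF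
  have hNN : ∀ s, s ≤ n → n - s ≤ NN n s πF (n - s) := by
    intro s hs
    have h := invariant hw s (n - 1) (n - s)
    rw [← hπF] at h
    omega
  have hlow : ∀ s : ℕ, s ≤ n → ∀ p : Fin n, (p : ℕ) < n - s → s ≤ (πF p : ℕ) := by
    intro s hs p hp
    have hsub : (univ.filter fun q : Fin n => (q : ℕ) < n - s ∧ s ≤ (πF q : ℕ)) ⊆
        (univ.filter fun q : Fin n => (q : ℕ) < n - s) := by
      intro x hx
      simp only [Finset.mem_filter] at hx ⊢
      exact ⟨hx.1, hx.2.1⟩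
    have hcard : (univ.filter fun q : Fin n => (q : ℕ) < n - s).card ≤
        (univ.filter fun q : Fin n => (q : ℕ) < n - s ∧ s ≤ (πF q : ℕ)).card := by
      have h1 := card_filter_lt_le n (n - s)
      have h2 := hNN s hs
      unfold NN at h2
      omega
    have heq := Finset.eq_of_subset_of_card_le hsub hcard
    have hmem : p ∈ (univ.filter fun q : Fin n => (q : ℕ) < n - s) := by
      simp [hp]
    rw [← heq] at hmem
    simp only [Finset.mem_filter] at hmem
    exact hmem.2.2
  have hhigh : ∀ s : ℕ, s ≤ n → ∀ p : Fin n, n - s ≤ (p : ℕ) → (πF p : ℕ) < s := by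
    intro s hs p hp
    by_contra hc
    push_neg at hc
    have hsub : (univ.filter fun q : Fin n => (q : ℕ) < n - s ∧ s ≤ (πF q : ℕ)) ⊆
        (univ.filter fun q : Fin n => (q : ℕ) < n ∧ s ≤ (πF q : ℕ)) := by
      intro x hx
      simp only [Finset.mem_filter] at hx ⊢
      exact ⟨hx.1, x.isLt, hx.2.2⟩
    have hG : NN n s πF n = n - s := NN_total πF (le_refl n)
    have hF := hNN s hs
    unfold NN at hG hF
    have heq := Finset.eq_of_subset_of_card_le hsub (by omega)
    have hmem : p ∈ (univ.filter fun q : Fin n => (q : ℕ) < n ∧ s ≤ (πF q : ℕ)) := by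
      simp only [Finset.mem_filter, Finset.mem_univ, true_and]
      exact ⟨p.isLt, hc⟩
    rw [← heq] at hmem
    simp only [Finset.mem_filter] at hmem
    omega
  apply Equiv.ext
  intro p
  have hp := p.isLt
  have h1 : n - 1 - (p : ℕ) ≤ (πF p : ℕ) := hlow (n - 1 - (p : ℕ)) (by omega) p (by omega)
  have h2 : (πF p : ℕ) < n - (p : ℕ) := hhigh (n - (p : ℕ)) (by omega) p (by omega)
  apply Fin.ext
  rw [Fin.revPerm_apply, Fin.val_rev]
  omega

lemma kept_sublist (n : ℕ) (π : Equiv.Perm (Fin n)) (l : List ℕ) :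
    (kept n π l).Sublist l := by
  induction l generalizing π with
  | nil => simp [kept]
  | cons h t ih =>
    unfold kept
    split_ifs with hg
    · exact (ih (pstep n π h)).cons₂ h
    · exact (ih (pstep n π h)).cons h

lemma kept_prod (n : ℕ) (π : Equiv.Perm (Fin n)) (l : List ℕ) :
    π * ((kept n π l).map (adjTransposition n)).prod = passP n π l := by
  induction l generalizing π with
  | nil => simp [kept, passP]
  | cons h t ih =>
    have hfold : passP n π (h :: t) = passP n (pstep n π h) t := by simp [passP]
    rw [hfold]
    unfold kept
    split_ifs with hg
    · rw [List.map_cons, List.prod_cons, ← mul_assoc]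
      have hps : pstep n π h = π * adjTransposition n h := if_pos hg
      rw [← hps]
      exact ih (pstep n π h)
    · have hps : pstep n π h = π := if_neg hg
      rw [← ih (pstep n π h), hps]

lemma ord_lemma {n h : ℕ} (hh : h + 1 < n) (p q : Fin n) (hpq : p < q)
    (hne : ¬((p : ℕ) = h ∧ (q : ℕ) = h + 1)) :
    adjTransposition n h p < adjTransposition n h q := by
  have hvp := adj_apply_val hh p
  have hvq := adj_apply_val hh q
  rw [Fin.lt_def] at hpq ⊢
  have hqb := q.isLt
  split_ifs at hvp hvq <;> omega

lemma DD_step {n : ℕ} {π : Equiv.Perm (Fin n)} {h : ℕ} (hg : pguard n π h) :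
    (DD n (π * adjTransposition n h)).card = (DD n π).card + 2 := by
  obtain ⟨hh, hasc⟩ := hg
  rw [pval_lt π (show h < n by omega), pval_lt π hh] at hasc
  set a : Fin n := ⟨h, by omega⟩ with ha
  set b : Fin n := ⟨h + 1, hh⟩ with hb
  have hab : a < b := by rw [Fin.lt_def]; simp [ha, hb]
  have habne : a ≠ b := ne_of_lt hab
  have hpab : π a < π b := by rw [Fin.lt_def]; exact hasc
  set σ := adjTransposition n h with hσ
  have hσa : σ a = b := adj_apply_left hh
  have hσb : σ b = a := adj_apply_right hh
  have hσσ : ∀ x : Fin n, σ (σ x) = x := by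
    intro x
    rw [hσ, adj_eq hh, Equiv.swap_apply_self]
  set E : Finset (Fin n × Fin n) := {(a, b), (b, a)} with hE
  have hEcard : E.card = 2 := by
    rw [hE, Finset.card_insert_of_notMem
      (by simp only [Finset.mem_singleton]
          exact fun hx => habne (congrArg Prod.fst hx)), Finset.card_singleton]
  have hmemE : ∀ x : Fin n × Fin n, x ∈ E ↔ x = (a, b) ∨ x = (b, a) := by
    intro x
    simp [hE]
  have hEsub : E ⊆ DD n (π * σ) := by
    intro x hx
    rw [hmemE] at hx
    rcases hx with rfl | rfl
    · simp only [DD, Finset.mem_filter, Finset.mem_univ, true_and]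
      left
      refine ⟨hab, ?_⟩
      simp only [Equiv.Perm.mul_apply, hσa, hσb]
      exact hpab
    · simp only [DD, Finset.mem_filter, Finset.mem_univ, true_and]
      right
      refine ⟨hab, ?_⟩
      simp only [Equiv.Perm.mul_apply, hσa, hσb]
      exact hpab
  have hEdisj : ∀ x : Fin n × Fin n, x ∈ E → x ∉ DD n π := by
    intro x hx
    rw [hmemE] at hx
    rcases hx with rfl | rfl <;>
    · simp only [DD, Finset.mem_filter, Finset.mem_univ, true_and]
      push_neg
      constructor <;>
        (intro h1
         first
           | exact le_of_lt hpab
           | exact absurd h1 (asymm hab))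
  have hpt : ∀ x : Fin n × Fin n, x ∉ E → (x ∈ DD n (π * σ) ↔ (σ x.1, σ x.2) ∈ DD n π) := by
    intro x hx
    have hx1 : x ≠ (a, b) := fun hc => hx ((hmemE x).2 (Or.inl hc))
    have hx2 : x ≠ (b, a) := fun hc => hx ((hmemE x).2 (Or.inr hc))
    have hne1 : ¬((x.1 : ℕ) = h ∧ (x.2 : ℕ) = h + 1) := by
      rintro ⟨u1, u2⟩
      apply hx1
      rw [Prod.ext_iff]
      constructor
      · rw [ha]; exact Fin.ext u1
      · rw [hb]; exact Fin.ext u2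
    have hne2 : ¬((x.2 : ℕ) = h ∧ (x.1 : ℕ) = h + 1) := by
      rintro ⟨u1, u2⟩
      apply hx2
      rw [Prod.ext_iff]
      constructor
      · rw [hb]; exact Fin.ext u2
      · rw [ha]; exact Fin.ext u1
    have d1 : x.1 < x.2 → σ x.1 < σ x.2 := fun hlt => ord_lemma hh x.1 x.2 hlt hne1
    have d2 : x.2 < x.1 → σ x.2 < σ x.1 := fun hlt => ord_lemma hh x.2 x.1 hlt hne2
    have hiff1 : x.1 < x.2 ↔ σ x.1 < σ x.2 := by
      constructor
      · exact d1
      · intro hs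
        rcases lt_trichotomy x.1 x.2 with hlt | heq | hgt
        · exact hlt
        · rw [heq] at hs; exact absurd hs (lt_irrefl _)
        · exact absurd hs (asymm (d2 hgt))
    have hiff2 : x.2 < x.1 ↔ σ x.2 < σ x.1 := by
      constructor
      · exact d2
      · intro hs
        rcases lt_trichotomy x.2 x.1 with hlt | heq | hgt
        · exact hlt
        · rw [heq] at hs; exact absurd hs (lt_irrefl _)
        · exact absurd hs (asymm (d1 hgt))
    simp only [DD, Finset.mem_filter, Finset.mem_univ, true_and]
    simp only [Equiv.Perm.mul_apply]
    rw [← hiff1, ← hiff2]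
  have hnotE : ∀ x : Fin n × Fin n, x ∉ E → (σ x.1, σ x.2) ∉ E := by
    intro x hx hc
    rw [hmemE] at hc
    apply hx
    rw [hmemE]
    rcases hc with hc | hc
    · right
      have c1 : σ x.1 = a := congrArg Prod.fst hc
      have c2 : σ x.2 = b := congrArg Prod.snd hc
      have e1 : x.1 = b := by rw [← hσσ x.1, c1, hσa]
      have e2 : x.2 = a := by rw [← hσσ x.2, c2, hσb]
      rw [Prod.ext_iff]
      exact ⟨e1, e2⟩
    · left
      have c1 : σ x.1 = b := congrArg Prod.fst hc
      have c2 : σ x.2 = a := congrArg Prod.snd hc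
      have e1 : x.1 = a := by rw [← hσσ x.1, c1, hσb]
      have e2 : x.2 = b := by rw [← hσσ x.2, c2, hσa]
      rw [Prod.ext_iff]
      exact ⟨e1, e2⟩
  have hbij : (DD n (π * σ) \ E).card = (DD n π \ E).card := by
    apply Finset.card_bij' (i := fun x _ => (σ x.1, σ x.2)) (j := fun x _ => (σ x.1, σ x.2))
    · intro x hx
      rw [Finset.mem_sdiff] at hx ⊢
      exact ⟨(hpt x hx.2).1 hx.1, hnotE x hx.2⟩
    · intro y hy
      rw [Finset.mem_sdiff] at hy ⊢
      have hyE := hnotE y hy.2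
      constructor
      · rw [hpt _ hyE]
        simp only [hσσ]
        exact hy.1
      · exact hyE
    · intro x _
      rw [Prod.ext_iff]
      exact ⟨hσσ x.1, hσσ x.2⟩
    · intro x _
      rw [Prod.ext_iff]
      exact ⟨hσσ x.1, hσσ x.2⟩
  have hc1 : (DD n (π * σ) \ E).card + E.card = (DD n (π * σ)).card :=
    Finset.card_sdiff_add_card_eq_card hEsub
  have hc2 : DD n π \ E = DD n π := by
    rw [Finset.sdiff_eq_self_iff_disjoint]
    rw [Finset.disjoint_right]
    intro x hx
    exact hEdisj x hx
  rw [hc2] at hbij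
  omega

lemma kept_count (n : ℕ) (π : Equiv.Perm (Fin n)) (l : List ℕ) :
    (DD n (passP n π l)).card = (DD n π).card + 2 * (kept n π l).length := by
  induction l generalizing π with
  | nil => simp [kept, passP]
  | cons h t ih =>
    have hfold : passP n π (h :: t) = passP n (pstep n π h) t := by simp [passP]
    rw [hfold]
    unfold kept
    split_ifs with hg
    · have hps : pstep n π h = π * adjTransposition n h := if_pos hg
      have hstep : (DD n (pstep n π h)).card = (DD n π).card + 2 := by
        rw [hps]; exact DD_step hg
      have := ih (pstep n π h)
      simp only [List.length_cons]
      omega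
    · have hps : pstep n π h = π := if_neg hg
      have h2 := ih (pstep n π h)
      rw [hps] at h2 ⊢
      exact h2

lemma DD_one (n : ℕ) : (DD n 1).card = 0 := by
  rw [Finset.card_eq_zero]
  ext x
  simp only [DD, Finset.mem_filter, Finset.mem_univ, true_and]
  simp only [Finset.notMem_empty,
    iff_false, Equiv.Perm.one_apply]
  rintro (⟨h1, h2⟩ | ⟨h1, h2⟩) <;> exact absurd h2 (asymm h1)

lemma DD_rev (n : ℕ) : (DD n (Fin.revPerm : Equiv.Perm (Fin n))).card = n * n - n := by
  have heq : DD n (Fin.revPerm : Equiv.Perm (Fin n)) = Finset.univ.offDiag := by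
    ext x
    simp only [DD, Finset.mem_filter, Finset.mem_univ, true_and, Finset.mem_offDiag,
      Fin.revPerm_apply]
    rw [Fin.rev_lt_rev, Fin.rev_lt_rev]
    constructor
    · rintro (⟨h1, _⟩ | ⟨h1, _⟩)
      · exact ne_of_lt h1
      · exact ne_of_gt h1
    · intro hne
      rcases lt_or_gt_of_ne hne with h1 | h1
      · exact Or.inl ⟨h1, h1⟩
      · exact Or.inr ⟨h1, h1⟩
  rw [heq, Finset.offDiag_card]
  simp

end Stmt19


/-- If `w` is a word containing each of the `n-1` adjacent-transposition symbols
exactly once, then the concatenation of `n-1` copies of `w` contains as a subword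
a reduced word for the longest element `w₀` (the order-reversing permutation) of
the symmetric group `S_n`, i.e. a word of length `n(n-1)/2` whose product of
generators is `w₀`. -/
theorem stmt19 (n : ℕ) (w : List ℕ) (hw : w.Perm (List.range (n - 1))) :
    ∃ j : List ℕ, j.Sublist (List.replicate (n - 1) w).flatten ∧
      j.length = n * (n - 1) / 2 ∧
      (j.map (adjTransposition n)).prod = (Fin.revPerm : Equiv.Perm (Fin n)) := by
  refine ⟨Stmt19.kept n 1 (List.replicate (n - 1) w).flatten,
    Stmt19.kept_sublist n 1 _, ?_, ?_⟩
  · have hfin := Stmt19.final_rev hw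
    have hcount := Stmt19.kept_count n 1 (List.replicate (n - 1) w).flatten
    rw [hfin, Stmt19.DD_rev, Stmt19.DD_one] at hcount
    have hmul : n * (n - 1) = n * n - n := by
      rw [Nat.mul_sub, mul_one]
    omega
  · have hprod := Stmt19.kept_prod n 1 (List.replicate (n - 1) w).flatten
    rw [one_mul] at hprod
    rw [hprod]
    exact Stmt19.final_rev hw
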